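/- Let 𝒩 be a closed n-dimensional Riemannian manifold, x ∈ 𝒩, r > 0, and suppose the heat kernel satisfies ℋ(x,y,r^2) ≤ C r^{-n} e^{-d(x,y)^2/(5r^2)} for all y. Let Σ be an m-dimensional submanifold with area growth κ(Σ) = sup_{z,ρ} Area(Σ∩B_ρ(z))/ρ^m < ∞. Then F_{x,r^2}(Σ) = r^{n-m}∫_Σ ℋ(x,y,r^2) dy ≤ C'·κ(Σ), where C' depends only on n, m, and the constant C, provided additionally that for each k ≥ 0 the annulus A_k = {y : kr ≤ d(x,y) ≤ (k+1)r} can be covered by at most C k^{n-1} geodesic balls of radius r. -/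
import Mathlib

set_option maxHeartbeats 1000000

open MeasureTheory Metric

/-- The F-functional `F_{x,t}(Σ) = t^p ∫_Σ ℋ(x,y,t) dy`, `p = (n-m)/2`, the
submanifold `Σ` being represented by its area measure `μ`. -/
noncomputable def Ffunc {X : Type*} [MeasurableSpace X] (H : X → X → ℝ → ENNReal)
    (μ : Measure X) (p : ℝ) (x : X) (t : ℝ) : ENNReal :=
  ENNReal.ofReal (t ^ p) * ∫⁻ y, H x y t ∂μ

/-- The area growth `κ(Σ) = sup_{z, ρ>0} Area(Σ ∩ B_ρ(z)) / ρ^m`. -/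
noncomputable def areaGrowth {X : Type*} [MetricSpace X] [MeasurableSpace X]
    (μ : Measure X) (m : ℕ) : ENNReal :=
  ⨆ (z : X) (ρ : ℝ) (_ : 0 < ρ), μ (ball z ρ) / ENNReal.ofReal (ρ ^ m)

/-- The series `∑ (k+1)^j e^{-(k+1)²/5}` converges. -/
lemma aux_summable (j : ℕ) :
    Summable (fun k : ℕ => ((k : ℝ) + 1) ^ j * Real.exp (-((k : ℝ) + 1) ^ 2 / 5)) := by
  have hx : ‖Real.exp (-(1 / 5))‖ < 1 := by
    rw [Real.norm_eq_abs, abs_of_pos (Real.exp_pos _)]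
    exact Real.exp_lt_one_iff.mpr (by norm_num)
  have h1 : Summable (fun k : ℕ => (k : ℝ) ^ j * (Real.exp (-(1 / 5))) ^ k) :=
    summable_pow_mul_geometric_of_norm_lt_one j hx
  have h2 : Summable (fun k : ℕ => ((k + 1 : ℕ) : ℝ) ^ j * (Real.exp (-(1 / 5))) ^ (k + 1)) :=
    (summable_nat_add_iff 1).mpr h1
  refine h2.of_nonneg_of_le (fun k => by positivity) (fun k => ?_)
  have hexp : Real.exp (-((k : ℝ) + 1) ^ 2 / 5) ≤ (Real.exp (-(1 / 5))) ^ (k + 1) := by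
    rw [← Real.exp_nat_mul, Real.exp_le_exp]
    push_cast
    nlinarith [sq_nonneg ((k : ℝ))]
  have hcast : ((k + 1 : ℕ) : ℝ) = (k : ℝ) + 1 := by push_cast; ring
  rw [hcast]
  exact mul_le_mul_of_nonneg_left hexp (by positivity)

/-- Area growth bounds the F-functional: on a closed `n`-manifold, if the heat
kernel satisfies the Gaussian upper bound `ℋ(x,y,r²) ≤ C r^{-n} e^{-d(x,y)²/(5r²)}`
and each annulus `A_k = {y : kr ≤ d(x,y) ≤ (k+1)r}`, `k ≥ 1`, can be covered by
at most `Ccov·k^{n-1}` geodesic balls of radius `r`, then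
`F_{x,r²}(Σ) ≤ C'·κ(Σ)` for every `m`-dimensional submanifold `Σ` of finite area
growth, with `C'` depending only on `n`, `m` and the constants `C`, `Ccov`. -/
theorem stmt_5 (n m : ℕ) (C Ccov : ENNReal) (hC : C ≠ ⊤) (hCcov : Ccov ≠ ⊤) :
    ∃ C' : ENNReal, C' ≠ ⊤ ∧
      ∀ (X : Type) (_ : MetricSpace X) (_ : MeasurableSpace X)
        (H : X → X → ℝ → ENNReal) (μ : Measure X) (x : X) (r : ℝ), 0 < r →
        (∀ y : X, H x y (r ^ 2) ≤
          C * (ENNReal.ofReal (r ^ n))⁻¹ *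
            ENNReal.ofReal (Real.exp (-(dist x y) ^ 2 / (5 * r ^ 2)))) →
        areaGrowth μ m ≠ ⊤ →
        (∀ k : ℕ, 1 ≤ k → ∃ s : Finset X,
          (s.card : ENNReal) ≤ Ccov * (k : ENNReal) ^ (n - 1) ∧
          {y : X | (k : ℝ) * r ≤ dist x y ∧ dist x y ≤ ((k : ℝ) + 1) * r} ⊆
            ⋃ z ∈ s, closedBall z r) →
        Ffunc H μ (((n : ℝ) - m) / 2) x (r ^ 2) ≤ C' * areaGrowth μ m := by
  classical
  -- the tail series, as an extended nonneg real
  set T : ENNReal := ∑' k : ℕ,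
      ((k : ENNReal) + 1) ^ (n - 1) * ENNReal.ofReal (Real.exp (-((k : ℝ) + 1) ^ 2 / 5))
    with hTdef
  have hTtop : T ≠ ⊤ := by
    have hs := aux_summable (n - 1)
    have hT2 : T = ENNReal.ofReal
        (∑' k : ℕ, ((k : ℝ) + 1) ^ (n - 1) * Real.exp (-((k : ℝ) + 1) ^ 2 / 5)) := by
      rw [ENNReal.ofReal_tsum_of_nonneg (fun k => by positivity) hs, hTdef]
      refine tsum_congr fun k => ?_
      rw [ENNReal.ofReal_mul (by positivity), ENNReal.ofReal_pow (by positivity)]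
      congr 2
      rw [ENNReal.ofReal_add (by positivity) (by norm_num), ENNReal.ofReal_natCast,
        ENNReal.ofReal_one]
    rw [hT2]; exact ENNReal.ofReal_ne_top
  refine ⟨C * 2 ^ m * (1 + Ccov * T), ?_, ?_⟩
  · exact ENNReal.mul_ne_top (ENNReal.mul_ne_top hC (by simp))
      (ENNReal.add_ne_top.mpr ⟨ENNReal.one_ne_top, ENNReal.mul_ne_top hCcov hTtop⟩)
  intro X _ _ H μ x r hr hH _hκ hcov
  set κ := areaGrowth μ m with hκdef
  set R := ENNReal.ofReal (r ^ m) with hRdef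
  -- the basic ball estimate
  have hball : ∀ z : X, μ (ball z (2 * r)) ≤ 2 ^ m * (κ * R) := by
    intro z
    have h1 : μ (ball z (2 * r)) / ENNReal.ofReal ((2 * r) ^ m) ≤ κ := by
      rw [hκdef, areaGrowth]
      exact le_iSup_of_le z (le_iSup_of_le (2 * r) (le_iSup_of_le (by positivity) le_rfl))
    have h0 : ENNReal.ofReal ((2 * r) ^ m) ≠ 0 := by
      simp only [ne_eq, ENNReal.ofReal_eq_zero, not_le]; positivity
    have h2 := (ENNReal.div_le_iff_le_mul (Or.inl h0) (Or.inl ENNReal.ofReal_ne_top)).mp h1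
    calc μ (ball z (2 * r)) ≤ κ * ENNReal.ofReal ((2 * r) ^ m) := h2
      _ = 2 ^ m * (κ * R) := by
          rw [mul_pow, ENNReal.ofReal_mul (by positivity), ENNReal.ofReal_pow (by norm_num),
            ENNReal.ofReal_ofNat, hRdef]
          ring
  -- the annuli
  set S : ℕ → Set X := fun k => {y | (k : ℝ) * r ≤ dist x y ∧ dist x y ≤ ((k : ℝ) + 1) * r}
    with hSdef
  have hScover : (Set.univ : Set X) ⊆ ⋃ k, S k := by
    intro y _
    have hd : 0 ≤ dist x y := dist_nonneg
    refine Set.mem_iUnion.mpr ⟨⌊dist x y / r⌋₊, ?_, ?_⟩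
    · have h := Nat.floor_le (div_nonneg hd hr.le)
      calc (⌊dist x y / r⌋₊ : ℝ) * r ≤ (dist x y / r) * r := by gcongr
        _ = dist x y := div_mul_cancel₀ _ hr.ne'
    · have h := (Nat.lt_floor_add_one (dist x y / r)).le
      calc dist x y = (dist x y / r) * r := (div_mul_cancel₀ _ hr.ne').symm
        _ ≤ ((⌊dist x y / r⌋₊ : ℝ) + 1) * r := by gcongr
  -- the Gaussian dominating function
  set B : ENNReal := C * (ENNReal.ofReal (r ^ n))⁻¹ with hBdef
  set g : X → ENNReal := fun y =>
    B * ENNReal.ofReal (Real.exp (-(dist x y) ^ 2 / (5 * r ^ 2))) with hgdef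
  have step1 : ∫⁻ y, H x y (r ^ 2) ∂μ ≤ ∫⁻ y, g y ∂μ := lintegral_mono hH
  have step2 : ∫⁻ y, g y ∂μ ≤ ∑' k : ℕ, ∫⁻ y in S k, g y ∂μ := by
    rw [← setLIntegral_univ]
    exact (lintegral_mono_set hScover).trans (lintegral_iUnion_le _ _)
  -- pointwise bound on each annulus
  have step3 : ∀ k : ℕ, ∫⁻ y in S k, g y ∂μ ≤
      B * ENNReal.ofReal (Real.exp (-(k : ℝ) ^ 2 / 5)) * μ (S k) := by
    intro k
    rw [← setLIntegral_const]
    refine setLIntegral_mono measurable_const fun y hy => ?_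
    refine mul_le_mul_right (ENNReal.ofReal_le_ofReal (Real.exp_le_exp.mpr ?_)) _
    obtain ⟨hy1, _⟩ := hy
    have hkr : (0:ℝ) ≤ (k : ℝ) * r := by positivity
    have hsq : ((k : ℝ) * r) ^ 2 ≤ (dist x y) ^ 2 := by
      apply sq_le_sq' _ hy1; linarith [dist_nonneg (x := x) (y := y)]
    have hr2 : (0:ℝ) < r ^ 2 := pow_pos hr 2
    rw [div_le_div_iff₀ (mul_pos (by norm_num : (0:ℝ) < 5) hr2) (by norm_num : (0:ℝ) < 5)]
    nlinarith
  -- measure bounds on the annuli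
  have hS0 : μ (S 0) ≤ 2 ^ m * (κ * R) := by
    refine le_trans (measure_mono ?_) (hball x)
    intro y hy
    obtain ⟨_, hy2⟩ := hy
    simp only [mem_ball]
    rw [dist_comm]
    have : dist x y ≤ ((0:ℕ) + 1 : ℝ) * r := hy2
    push_cast at this
    nlinarith
  have hSk : ∀ k : ℕ, 1 ≤ k →
      μ (S k) ≤ Ccov * (k : ENNReal) ^ (n - 1) * (2 ^ m * (κ * R)) := by
    intro k hk
    obtain ⟨s, hcard, hsub⟩ := hcov k hk
    have hsub2 : S k ⊆ ⋃ z ∈ s, ball z (2 * r) := by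
      refine hsub.trans (Set.iUnion₂_mono fun z _ => ?_)
      intro y hy
      simp only [mem_closedBall] at hy
      simp only [mem_ball]
      linarith
    calc μ (S k) ≤ ∑ z ∈ s, μ (ball z (2 * r)) :=
          (measure_mono hsub2).trans (measure_biUnion_finset_le s _)
      _ ≤ ∑ _z ∈ s, 2 ^ m * (κ * R) := Finset.sum_le_sum fun z _ => hball z
      _ = (s.card : ENNReal) * (2 ^ m * (κ * R)) := by
          rw [Finset.sum_const, nsmul_eq_mul]
      _ ≤ Ccov * (k : ENNReal) ^ (n - 1) * (2 ^ m * (κ * R)) :=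
          mul_le_mul_left hcard _
  -- summing everything
  set M : ENNReal := 2 ^ m * (κ * R) with hMdef
  have hsum : ∑' k : ℕ, ∫⁻ y in S k, g y ∂μ ≤ B * M * (1 + Ccov * T) := by
    calc ∑' k : ℕ, ∫⁻ y in S k, g y ∂μ
        ≤ ∑' k : ℕ, B * ENNReal.ofReal (Real.exp (-(k : ℝ) ^ 2 / 5)) * μ (S k) :=
          ENNReal.tsum_le_tsum step3
      _ = B * ENNReal.ofReal (Real.exp (-((0:ℕ) : ℝ) ^ 2 / 5)) * μ (S 0) +
          ∑' k : ℕ, B * ENNReal.ofReal (Real.exp (-((k : ℝ) + 1) ^ 2 / 5)) * μ (S (k + 1)) := by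
          rw [tsum_eq_zero_add' ENNReal.summable]
          congr 1
          refine tsum_congr fun k => ?_
          have : (((k + 1 : ℕ)) : ℝ) = (k : ℝ) + 1 := by push_cast; ring
          rw [this]
      _ ≤ B * 1 * M + ∑' k : ℕ, B * ENNReal.ofReal (Real.exp (-((k : ℝ) + 1) ^ 2 / 5)) *
            (Ccov * ((k : ENNReal) + 1) ^ (n - 1) * M) := by
          refine add_le_add ?_ (ENNReal.tsum_le_tsum fun k => ?_)
          · refine mul_le_mul' (mul_le_mul_right ?_ B) hS0
            rw [ENNReal.ofReal_le_one]
            exact Real.exp_le_one_iff.mpr (by norm_num)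
          · refine mul_le_mul_right ?_ _
            have h := hSk (k + 1) (Nat.le_add_left 1 k)
            have hc : (((k + 1 : ℕ)) : ENNReal) = (k : ENNReal) + 1 := by push_cast; ring
            rwa [hc] at h
      _ = B * M + (B * M * Ccov) *
            ∑' k : ℕ, ((k : ENNReal) + 1) ^ (n - 1) *
              ENNReal.ofReal (Real.exp (-((k : ℝ) + 1) ^ 2 / 5)) := by
          rw [mul_one]
          congr 1
          rw [← ENNReal.tsum_mul_left]
          exact tsum_congr fun k => by ring
      _ = B * M * (1 + Ccov * T) := by rw [← hTdef]; ring
  -- the power bookkeeping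
  have hkey : ENNReal.ofReal ((r ^ 2) ^ (((n : ℝ) - m) / 2)) *
      ((ENNReal.ofReal (r ^ n))⁻¹ * R) = 1 := by
    have hreal : (r ^ 2) ^ (((n : ℝ) - m) / 2) * r ^ m = r ^ n := by
      have h1 : (r ^ 2 : ℝ) ^ (((n : ℝ) - m) / 2) = r ^ ((n:ℝ) - m) := by
        rw [← Real.rpow_natCast r 2, ← Real.rpow_mul hr.le]
        congr 1
        push_cast
        ring
      rw [h1, ← Real.rpow_natCast r m, ← Real.rpow_add hr, ← Real.rpow_natCast r n]
      congr 1
      ring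
    have hpos : (0:ℝ) < r ^ n := pow_pos hr n
    calc ENNReal.ofReal ((r ^ 2) ^ (((n : ℝ) - m) / 2)) * ((ENNReal.ofReal (r ^ n))⁻¹ * R)
        = ENNReal.ofReal ((r ^ 2) ^ (((n : ℝ) - m) / 2) * r ^ m) *
            (ENNReal.ofReal (r ^ n))⁻¹ := by
          rw [ENNReal.ofReal_mul (by positivity), hRdef]; ring
      _ = ENNReal.ofReal (r ^ n) * (ENNReal.ofReal (r ^ n))⁻¹ := by rw [hreal]
      _ = 1 := ENNReal.mul_inv_cancel (by simpa using hpos) ENNReal.ofReal_ne_top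
  -- final assembly
  set A : ENNReal := ENNReal.ofReal ((r ^ 2) ^ (((n : ℝ) - m) / 2)) with hAdef
  set v : ENNReal := (ENNReal.ofReal (r ^ n))⁻¹ with hvdef
  calc Ffunc H μ (((n : ℝ) - m) / 2) x (r ^ 2)
      = A * ∫⁻ y, H x y (r ^ 2) ∂μ := rfl
    _ ≤ A * (B * M * (1 + Ccov * T)) :=
        mul_le_mul_right ((step1.trans step2).trans hsum) A
    _ = C * 2 ^ m * (1 + Ccov * T) * κ * (A * (v * R)) := by
        rw [hBdef, hMdef]; ring
    _ = C * 2 ^ m * (1 + Ccov * T) * κ := by rw [hkey, mul_one]
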